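/- Let (X,d) be a complete metric space, k ∈ ℕ, and T : X^ℕ → X satisfy: for all u₁,…,u_k, v₁,…,v_k ∈ X, d(T(û), T(v̂)) ≤ (β(d(u_k, v_k))/2)·( d(T(û), v_k) + d(T(v̂), u_k) ), where û = (u₁,…,u_{k-1}, u_k, u_k, …) and v̂ = (v₁,…,v_{k-1}, v_k, v_k, …), and β is a Geraghty function. Then there exists u ∈ X such that T applied to the constant sequence (u,u,…) equals u, and the infinite k-Picard sequence from any base points x₁,…,x_k converges to u. -/

import Mathlib

open Filter Topology

def IsGeraghty (β : ℝ → ℝ) : Prop :=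
  (∀ t : ℝ, 0 ≤ t → 0 ≤ β t ∧ β t < 1) ∧
  (∀ t : ℕ → ℝ, (∀ n, 0 ≤ t n) →
    Filter.Tendsto (fun n => β (t n)) Filter.atTop (nhds 1) →
    Filter.Tendsto t Filter.atTop (nhds 0))

def hatSeq {X : Type*} (k : ℕ) (hk : 0 < k) (u : Fin k → X) : ℕ → X :=
  fun i => u ⟨min i (k - 1), by omega⟩

theorem aux_tendsto {X : Type*} [MetricSpace X] [CompleteSpace X]
    (k : ℕ) (hk : 0 < k) (β : ℝ → ℝ) (hβ : IsGeraghty β) (T : (ℕ → X) → X)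
    (hT : ∀ a b : Fin k → X,
      dist (T (hatSeq k hk a)) (T (hatSeq k hk b)) ≤
        β (dist (a ⟨k - 1, Nat.sub_lt hk Nat.one_pos⟩) (b ⟨k - 1, Nat.sub_lt hk Nat.one_pos⟩)) / 2 *
          (dist (T (hatSeq k hk a)) (b ⟨k - 1, Nat.sub_lt hk Nat.one_pos⟩) +
            dist (T (hatSeq k hk b)) (a ⟨k - 1, Nat.sub_lt hk Nat.one_pos⟩)))
    (x : ℕ → X) (Hrec : ∀ n, x (n + k) = T (hatSeq k hk (fun i : Fin k => x (n + i)))) :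
    ∃ u : X, T (fun _ => u) = u ∧ Tendsto x atTop (𝓝 u) := by
  have key : ∀ p q : ℕ,
      dist (x (p + k)) (x (q + k)) ≤
        β (dist (x (p + (k-1))) (x (q + (k-1)))) / 2 *
          (dist (x (p + k)) (x (q + (k-1))) + dist (x (q + k)) (x (p + (k-1)))) := by
    intro p q
    have h := hT (fun i => x (p + i)) (fun i => x (q + i))
    rw [← Hrec p, ← Hrec q] at h
    simpa using h
  -- consecutive distances
  set E : ℕ → ℝ := fun n => dist (x (n + k)) (x (n + (k-1))) with hEdef
  have hEnn : ∀ n, 0 ≤ E n := fun n => dist_nonneg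
  have stepE : ∀ n, E (n+1) ≤ β (E n) / (2 - β (E n)) * E n := by
    intro n
    have h := key (n+1) n
    have e1 : n+1+k = (n+k)+1 := by omega
    have e2 : n+1+(k-1) = n+k := by omega
    rw [e1, e2, dist_self] at h
    have htri : dist (x ((n+k)+1)) (x (n+(k-1))) ≤
        dist (x ((n+k)+1)) (x (n+k)) + dist (x (n+k)) (x (n+(k-1))) := dist_triangle _ _ _
    obtain ⟨hb1, hb2⟩ := hβ.1 (dist (x (n+k)) (x (n+(k-1)))) dist_nonneg
    have hE1 : E (n+1) = dist (x ((n+k)+1)) (x (n+k)) := by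
      simp only [hEdef]; congr 2 <;> omega
    have hE0 : E n = dist (x (n+k)) (x (n+(k-1))) := rfl
    rw [hE1, hE0]

    rw [div_mul_eq_mul_div, le_div_iff₀ (by linarith)]
    nlinarith [dist_nonneg (x := x ((n+k)+1)) (y := x (n+k)),
      dist_nonneg (x := x (n+k)) (y := x (n+(k-1)))]
  have hEanti : Antitone E := by
    apply antitone_nat_of_succ_le
    intro n
    obtain ⟨hb1, hb2⟩ := hβ.1 (E n) (hEnn n)
    have h := stepE n
    have : β (E n) / (2 - β (E n)) ≤ 1 := by
      rw [div_le_one (by linarith)]; linarith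
    nlinarith [hEnn n]
  have hbdd : BddBelow (Set.range E) := ⟨0, by rintro _ ⟨n, rfl⟩; exact hEnn n⟩
  have hE : Tendsto E atTop (𝓝 (⨅ n, E n)) := tendsto_atTop_ciInf hEanti hbdd
  set L := ⨅ n, E n with hLdef
  have hL0 : 0 ≤ L := le_ciInf hEnn
  have hLzero : L = 0 := by
    by_contra hne
    have hLpos : 0 < L := lt_of_le_of_ne hL0 (Ne.symm hne)
    have hLle : ∀ n, L ≤ E n := fun n => ciInf_le hbdd n
    have hE' : Tendsto (fun n => E (n+1)) atTop (𝓝 L) := hE.comp (tendsto_add_atTop_nat 1)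
    have hr : Tendsto (fun n => E (n+1) / E n) atTop (𝓝 1) := by
      have := hE'.div hE (ne_of_gt hLpos)
      rwa [div_self (ne_of_gt hLpos)] at this
    have hlow : ∀ n, 2 * (E (n+1) / E n) / (1 + E (n+1) / E n) ≤ β (E n) := by
      intro n
      obtain ⟨hb1, hb2⟩ := hβ.1 (E n) (hEnn n)
      have hEpos : 0 < E n := lt_of_lt_of_le hLpos (hLle n)
      have hs : 0 ≤ E (n+1) / E n := div_nonneg (hEnn _) (hEnn n)
      have h2 : (0:ℝ) < 2 - β (E n) := by linarith
      have hsle : E (n+1) / E n ≤ β (E n) / (2 - β (E n)) := by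
        rw [div_le_div_iff₀ hEpos h2]
        have hc : β (E n)/(2 - β (E n)) * E n * (2 - β (E n)) = β (E n) * E n := by
          field_simp
        nlinarith [mul_le_mul_of_nonneg_right (stepE n) h2.le]
      have h4 := (le_div_iff₀ h2).mp hsle
      rw [div_le_iff₀ (by linarith : (0:ℝ) < 1 + E (n+1)/E n)]
      nlinarith
    have hlowlim : Tendsto (fun n => 2 * (E (n+1) / E n) / (1 + E (n+1) / E n))
        atTop (𝓝 1) := by
      have h2 : Tendsto (fun n => 2 * (E (n+1) / E n)) atTop (𝓝 2) := by
        simpa using hr.const_mul (2:ℝ)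
      have h3 : Tendsto (fun n => 1 + E (n+1) / E n) atTop (𝓝 (1+1)) :=
        hr.const_add 1
      have h4 := h2.div h3 (by norm_num : (1:ℝ)+1 ≠ 0)
      norm_num at h4
      exact h4
    have hβlim : Tendsto (fun n => β (E n)) atTop (𝓝 1) :=
      tendsto_of_tendsto_of_tendsto_of_le_of_le hlowlim tendsto_const_nhds
        hlow (fun n => le_of_lt (hβ.1 (E n) (hEnn n)).2)
    have := hβ.2 E hEnn hβlim
    exact hne (tendsto_nhds_unique hE this)
  rw [hLzero] at hE
  -- dist of consecutive terms tends to 0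
  have hD : Tendsto (fun n => dist (x (n+1)) (x n)) atTop (𝓝 0) := by
    rw [← tendsto_add_atTop_iff_nat (k-1)]
    have : (fun n => dist (x (n + (k-1) + 1)) (x (n + (k-1)))) = E := by
      funext n
      simp only [hEdef]
      congr 2
      omega
    rw [this]
    exact hE
  -- Cauchy
  have hcauchy : CauchySeq x := by
    rw [Metric.cauchySeq_iff]
    by_contra hc
    push_neg at hc
    obtain ⟨ε, hε, hc⟩ := hc
    have hsel : ∀ i : ℕ, ∃ n, (k+1 ≤ n ∧ i + 1 ≤ n) ∧ ∃ m, n < m ∧ ε ≤ dist (x m) (x n) := by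
      intro i
      obtain ⟨a, ha, b, hb, hd⟩ := hc (max (k+1) (i+1))
      rcases lt_trichotomy a b with h | h | h
      · exact ⟨a, ⟨le_trans (le_max_left _ _) ha, le_trans (le_max_right _ _) ha⟩,
          b, h, by rwa [dist_comm]⟩
      · rw [h, dist_self] at hd; linarith
      · exact ⟨b, ⟨le_trans (le_max_left _ _) hb, le_trans (le_max_right _ _) hb⟩,
          a, h, hd⟩
    choose n hn hmex using hsel
    classical
    set m : ℕ → ℕ := fun i => Nat.find (hmex i) with hmdef
    have hmspec : ∀ i, n i < m i ∧ ε ≤ dist (x (m i)) (x (n i)) := fun i => Nat.find_spec (hmex i)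
    have hmmin : ∀ i, dist (x (m i - 1)) (x (n i)) < ε := by
      intro i
      rcases eq_or_lt_of_le (Nat.succ_le_of_lt (hmspec i).1) with h | h
      · have : m i - 1 = n i := by omega
        rw [this, dist_self]; exact hε
      · have hlt : m i - 1 < m i := by omega
        have := Nat.find_min (hmex i) hlt
        push_neg at this
        exact this (by omega)
    have hnk : ∀ i, k + 1 ≤ n i := fun i => (hn i).1
    have hni : ∀ i, i + 1 ≤ n i := fun i => (hn i).2
    -- auxiliary limits
    have hmtop : Tendsto (fun i => m i - 1) atTop atTop :=
      tendsto_atTop_mono (fun i => by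
        have h1 := hni i; have h2 := (hmspec i).1; simp only [id_eq]; omega) tendsto_id
    have hntop : Tendsto (fun i => n i - 1) atTop atTop :=
      tendsto_atTop_mono (fun i => by
        have h1 := hni i; have h2 := hnk i; simp only [id_eq]; omega) tendsto_id
    have hDm : Tendsto (fun i => dist (x (m i)) (x (m i - 1))) atTop (𝓝 0) := by
      have h0 := hD.comp hmtop
      apply h0.congr
      intro i
      have e : m i - 1 + 1 = m i := by have := (hmspec i).1; omega
      simp only [Function.comp]
      rw [e]
    have hDn : Tendsto (fun i => dist (x (n i)) (x (n i - 1))) atTop (𝓝 0) := by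
      have h0 := hD.comp hntop
      apply h0.congr
      intro i
      have e : n i - 1 + 1 = n i := by have := hnk i; omega
      simp only [Function.comp]
      rw [e]
    set d : ℕ → ℝ := fun i => dist (x (m i)) (x (n i)) with hddef
    set t : ℕ → ℝ := fun i => dist (x (m i - 1)) (x (n i - 1)) with htdef
    have hdlim : Tendsto d atTop (𝓝 ε) := by
      apply tendsto_of_tendsto_of_tendsto_of_le_of_le (tendsto_const_nhds (x := ε))
        (show Tendsto (fun i => dist (x (m i)) (x (m i - 1)) + ε) atTop (𝓝 ε) by
          simpa using hDm.add (tendsto_const_nhds (x := ε)))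
      · exact fun i => (hmspec i).2
      · intro i
        calc d i ≤ dist (x (m i)) (x (m i - 1)) + dist (x (m i - 1)) (x (n i)) :=
              dist_triangle _ _ _
          _ ≤ dist (x (m i)) (x (m i - 1)) + ε := by linarith [hmmin i]
    have htlim : Tendsto t atTop (𝓝 ε) := by
      apply tendsto_of_tendsto_of_tendsto_of_le_of_le
        (show Tendsto (fun i => d i - dist (x (m i)) (x (m i - 1))
            - dist (x (n i)) (x (n i - 1))) atTop (𝓝 ε) by
          simpa using (hdlim.sub hDm).sub hDn)
        (show Tendsto (fun i => ε + dist (x (n i)) (x (n i - 1))) atTop (𝓝 ε) by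
          simpa using (tendsto_const_nhds (x := ε)).add hDn)
      · intro i
        have htri : d i ≤ dist (x (m i)) (x (m i - 1)) + t i + dist (x (n i - 1)) (x (n i)) := by
          calc d i ≤ dist (x (m i)) (x (n i - 1)) + dist (x (n i - 1)) (x (n i)) :=
                dist_triangle _ _ _
            _ ≤ dist (x (m i)) (x (m i - 1)) + t i + dist (x (n i - 1)) (x (n i)) := by
                linarith [dist_triangle (x (m i)) (x (m i - 1)) (x (n i - 1))]
        show d i - dist (x (m i)) (x (m i - 1)) - dist (x (n i)) (x (n i - 1)) ≤ t i
        rw [dist_comm (x (n i - 1)) (x (n i))] at htri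
        linarith
      · intro i
        show t i ≤ ε + dist (x (n i)) (x (n i - 1))
        calc t i ≤ dist (x (m i - 1)) (x (n i)) + dist (x (n i)) (x (n i - 1)) :=
              dist_triangle _ _ _
          _ ≤ ε + dist (x (n i)) (x (n i - 1)) := by linarith [hmmin i]
    -- key contraction at (m i, n i)
    set δ : ℕ → ℝ := fun i => (dist (x (n i)) (x (n i - 1)) + dist (x (m i)) (x (m i - 1))) / 2
      with hδdef
    have hδnn : ∀ i, 0 ≤ δ i := fun i => by
      have := dist_nonneg (x := x (n i)) (y := x (n i - 1))
      have := dist_nonneg (x := x (m i)) (y := x (m i - 1))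
      simp only [hδdef]; linarith
    have hδlim : Tendsto δ atTop (𝓝 0) := by
      simpa using (hDn.add hDm).div_const 2
    have hβlow : ∀ i, 1 - δ i / ε ≤ β (t i) := by
      intro i
      have hm1 := (hmspec i).1
      have hk1 := hnk i
      have h := key (m i - k) (n i - k)
      have e1 : m i - k + k = m i := by omega
      have e2 : n i - k + k = n i := by omega
      have e3 : m i - k + (k-1) = m i - 1 := by omega
      have e4 : n i - k + (k-1) = n i - 1 := by omega
      rw [e1, e2, e3, e4] at h
      obtain ⟨hb1, hb2⟩ := hβ.1 (t i) dist_nonneg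
      have htr1 : dist (x (m i)) (x (n i - 1)) ≤ d i + dist (x (n i)) (x (n i - 1)) := by
        calc dist (x (m i)) (x (n i - 1)) ≤ dist (x (m i)) (x (n i)) + dist (x (n i)) (x (n i - 1)) :=
              dist_triangle _ _ _
          _ = d i + dist (x (n i)) (x (n i - 1)) := rfl
      have htr2 : dist (x (n i)) (x (m i - 1)) ≤ d i + dist (x (m i)) (x (m i - 1)) := by
        calc dist (x (n i)) (x (m i - 1)) ≤ dist (x (n i)) (x (m i)) + dist (x (m i)) (x (m i - 1)) :=
              dist_triangle _ _ _
          _ = d i + dist (x (m i)) (x (m i - 1)) := by rw [dist_comm (x (n i)) (x (m i))]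
      have h5 : d i ≤ β (t i) * (d i + δ i) := by
        calc d i ≤ β (t i) / 2 * (dist (x (m i)) (x (n i - 1)) + dist (x (n i)) (x (m i - 1))) := h
          _ ≤ β (t i) / 2 * (2 * d i + 2 * δ i) := by
              apply mul_le_mul_of_nonneg_left _ (by linarith)
              simp only [hδdef]
              linarith
          _ = β (t i) * (d i + δ i) := by ring
      have hdge : ε ≤ d i := (hmspec i).2
      have hpos : 0 < d i + δ i := by linarith [hδnn i]
      have h7 : δ i ≤ δ i / ε * (d i + δ i) := by
        have h8 : δ i / ε * ε ≤ δ i / ε * (d i + δ i) :=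
          mul_le_mul_of_nonneg_left (by linarith [hδnn i]) (div_nonneg (hδnn i) hε.le)
        rwa [div_mul_cancel₀ _ (ne_of_gt hε)] at h8
      have h6 : (1 - δ i / ε) * (d i + δ i) ≤ d i := by nlinarith
      exact le_of_mul_le_mul_right (h6.trans h5) hpos
    have hβt : Tendsto (fun i => β (t i)) atTop (𝓝 1) := by
      apply tendsto_of_tendsto_of_tendsto_of_le_of_le
        (show Tendsto (fun i => 1 - δ i / ε) atTop (𝓝 1) by
          have := (tendsto_const_nhds (x := (1:ℝ))).sub (hδlim.div_const ε)
          simpa using this)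
        (tendsto_const_nhds (x := (1:ℝ))) hβlow
        (fun i => le_of_lt (hβ.1 (t i) dist_nonneg).2)
    have ht0 := hβ.2 t (fun i => dist_nonneg) hβt
    have : ε = 0 := tendsto_nhds_unique htlim ht0
    linarith
  obtain ⟨u, hu⟩ := cauchySeq_tendsto_of_complete hcauchy
  refine ⟨u, ?_, hu⟩
  have hhat : hatSeq k hk (fun _ : Fin k => u) = fun _ => u := by funext i; rfl
  have hxk : Tendsto (fun n => x (n + k)) atTop (𝓝 u) := hu.comp (tendsto_add_atTop_nat k)
  have hxk1 : Tendsto (fun n => x (n + (k-1))) atTop (𝓝 u) := hu.comp (tendsto_add_atTop_nat (k-1))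
  have hbound : ∀ n, dist (x (n+k)) (T (fun _ => u)) ≤
      (dist (x (n+k)) u + dist (T (fun _ => u)) (x (n+(k-1)))) / 2 := by
    intro n
    have h := hT (fun i => x (n + i)) (fun _ => u)
    rw [← Hrec n, hhat] at h
    simp only at h
    obtain ⟨hb1, hb2⟩ := hβ.1 (dist (x (n+(k-1))) u) dist_nonneg
    have hs : 0 ≤ dist (x (n+k)) u + dist (T (fun _ => u)) (x (n+(k-1))) :=
      add_nonneg dist_nonneg dist_nonneg
    calc dist (x (n+k)) (T (fun _ => u))
        ≤ β (dist (x (n+(k-1))) u) / 2 *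
            (dist (x (n+k)) u + dist (T (fun _ => u)) (x (n+(k-1)))) := h
      _ ≤ 1 / 2 * (dist (x (n+k)) u + dist (T (fun _ => u)) (x (n+(k-1)))) := by nlinarith
      _ = (dist (x (n+k)) u + dist (T (fun _ => u)) (x (n+(k-1)))) / 2 := by ring
  have h1 : Tendsto (fun n => dist (x (n+k)) (T (fun _ => u))) atTop
      (𝓝 (dist u (T (fun _ => u)))) := hxk.dist tendsto_const_nhds
  have h2 : Tendsto (fun n => (dist (x (n+k)) u + dist (T (fun _ => u)) (x (n+(k-1)))) / 2)
      atTop (𝓝 ((0 + dist (T (fun _ => u)) u) / 2)) := by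
    have ha := hxk.dist (tendsto_const_nhds (x := u))
    rw [dist_self] at ha
    have hb := (tendsto_const_nhds (x := T (fun _ => u))).dist hxk1
    exact (ha.add hb).div_const 2
  have hle := le_of_tendsto_of_tendsto' h1 h2 hbound
  rw [dist_comm (T (fun _ => u)) u] at hle
  have h0 : dist u (T (fun _ => u)) = 0 := by linarith [dist_nonneg (x := u) (y := T (fun _ => u))]
  exact (eq_of_dist_eq_zero h0).symm

theorem extended_fisher_geraghty_Hk {X : Type*} [MetricSpace X] [CompleteSpace X] [Nonempty X]
    (k : ℕ) (hk : 0 < k) (β : ℝ → ℝ) (hβ : IsGeraghty β) (T : (ℕ → X) → X)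
    (hT : ∀ a b : Fin k → X,
      dist (T (hatSeq k hk a)) (T (hatSeq k hk b)) ≤
        β (dist (a ⟨k - 1, by omega⟩) (b ⟨k - 1, by omega⟩)) / 2 *
          (dist (T (hatSeq k hk a)) (b ⟨k - 1, by omega⟩) +
            dist (T (hatSeq k hk b)) (a ⟨k - 1, by omega⟩))) :
    ∃ u : X, T (fun _ => u) = u ∧
      ∀ x : ℕ → X, (∀ n, x (n + k) = T (hatSeq k hk (fun i : Fin k => x (n + i)))) →
        Tendsto x atTop (𝓝 u) := by
  have hhatc : ∀ v : X, hatSeq k hk (fun _ : Fin k => v) = fun _ => v := fun v => by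
    funext i; rfl
  have huniq : ∀ u v : X, T (fun _ => u) = u → T (fun _ => v) = v → u = v := by
    intro u v hu hv
    have h := hT (fun _ => u) (fun _ => v)
    rw [hhatc, hhatc, hu, hv] at h
    rw [dist_comm v u] at h
    obtain ⟨hb1, hb2⟩ := hβ.1 (dist u v) dist_nonneg
    by_contra hne
    have hd : 0 < dist u v := dist_pos.mpr hne
    nlinarith
  obtain ⟨p⟩ := ‹Nonempty X›
  let step : (Fin k → X) → (Fin k → X) := fun w i =>
    if h : (i : ℕ) + 1 < k then w ⟨(i : ℕ) + 1, h⟩ else T (hatSeq k hk w)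
  let W : ℕ → Fin k → X := fun n => step^[n] (fun _ => p)
  let x0 : ℕ → X := fun n => W n ⟨0, hk⟩
  have hWsucc : ∀ n, W (n+1) = step (W n) := fun n => Function.iterate_succ_apply' step n _
  have hshift : ∀ j, ∀ hj : j < k, ∀ n, W n ⟨j, hj⟩ = x0 (n + j) := by
    intro j
    induction j with
    | zero => intro hj n; rfl
    | succ j ih =>
      intro hj n
      have h1 : W (n+1) ⟨j, by omega⟩ = W n ⟨j+1, hj⟩ := by
        rw [hWsucc]
        show step (W n) ⟨j, by omega⟩ = _
        simp only [step, Fin.val_mk]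
        rw [dif_pos hj]
      rw [← h1, ih (by omega) (n+1)]
      congr 1
      omega
  have hrec0 : ∀ n, x0 (n + k) = T (hatSeq k hk (fun i : Fin k => x0 (n + i))) := by
    intro n
    have h1 : W (n+1) ⟨k-1, by omega⟩ = x0 (n + 1 + (k-1)) := hshift (k-1) (by omega) (n+1)
    have h2 : W (n+1) ⟨k-1, by omega⟩ = T (hatSeq k hk (W n)) := by
      rw [hWsucc]
      show step (W n) ⟨k-1, by omega⟩ = _
      simp only [step, Fin.val_mk]
      rw [dif_neg (by omega)]
    have h3 : (fun i : Fin k => x0 (n + i)) = W n := by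
      funext i
      exact (hshift i.val i.isLt n).symm
    rw [h3, ← h2, h1]
    congr 1
    omega
  obtain ⟨u, hufix, _⟩ := aux_tendsto k hk β hβ T hT x0 hrec0
  refine ⟨u, hufix, ?_⟩
  intro x hx
  obtain ⟨v, hvfix, hvlim⟩ := aux_tendsto k hk β hβ T hT x hx
  rwa [huniq v u hvfix hufix] at hvlim
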